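/- Let R be a unital associative ring and δ : R → R a derivation such that R is δ-simple, and let S = R[x;id_R,δ] be the differential polynomial ring. Then I ∩ Z(S) ≠ {0} holds for every non-zero two-sided ideal I of S, where Z(S) denotes the center of S. -/

import Mathlib

/-- `δ` is a `σ`-derivation of `R`: it is additive and satisfies the twisted Leibniz rule
`δ(ab) = σ(a)δ(b) + δ(a)b`. -/
def IsSigmaDerivation {R : Type*} [Ring R] (σ : R →+* R) (δ : R → R) : Prop :=
  (∀ a b : R, δ (a + b) = δ a + δ b) ∧ ∀ a b : R, δ (a * b) = σ a * δ b + δ a * b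

/-- `S`, together with the ring morphism `f : R →+* S` and the element `x : S`, is an Ore
extension `R[x;σ,δ]`: the powers `1, x, x², …` form a basis of `S` as a left `R`-module
(i.e. every element of `S` is, in a unique way, a finite sum `Σᵢ f(aᵢ) xⁱ`), and the
commutation rule `x·r = σ(r)·x + δ(r)` holds for all `r ∈ R`. -/
structure IsOreExtension {R S : Type*} [Ring R] [Ring S]
    (σ : R →+* R) (δ : R → R) (f : R →+* S) (x : S) : Prop where
  basis : Function.Bijective fun a : ℕ →₀ R => a.sum fun i r => f r * x ^ i
  rel : ∀ r : R, x * f r = f (σ r) * x + f (δ r)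

/-- `R` is `σ`-`δ`-simple: the only two-sided ideals `J` of `R` with `σ(J) ⊆ J` and
`δ(J) ⊆ J` are `{0}` and `R`. -/
def IsSigmaDeltaSimple {R : Type*} [Ring R] (σ : R →+* R) (δ : R → R) : Prop :=
  ∀ J : TwoSidedIdeal R, (∀ a ∈ J, σ a ∈ J) → (∀ a ∈ J, δ a ∈ J) → J = ⊥ ∨ J = ⊤

/-- `R` is `δ`-simple: the only two-sided ideals `J` of `R` with `δ(J) ⊆ J` are `{0}`
and `R`. -/
def IsDeltaSimple {R : Type*} [Ring R] (δ : R → R) : Prop :=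
  ∀ J : TwoSidedIdeal R, (∀ a ∈ J, δ a ∈ J) → J = ⊥ ∨ J = ⊤

namespace Stmt14Aux

variable {R S : Type*} [Ring R] [Ring S] {σ : R →+* R} {δ : R → R} {f : R →+* S} {x : S}

/-- The evaluation map as an additive monoid hom. -/
def φ (f : R →+* S) (x : S) : (ℕ →₀ R) →+ S where
  toFun a := a.sum fun i r => f r * x ^ i
  map_zero' := Finsupp.sum_zero_index
  map_add' a b := by
    rw [Finsupp.sum_add_index' (fun i => by rw [map_zero, zero_mul])
      (fun i b₁ b₂ => by rw [map_add, add_mul])]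

lemma φ_apply (a : ℕ →₀ R) : φ f x a = a.sum fun i r => f r * x ^ i := rfl

lemma φ_single (i : ℕ) (r : R) : φ f x (Finsupp.single i r) = f r * x ^ i := by
  rw [φ_apply]; exact Finsupp.sum_single_index (by rw [map_zero, zero_mul])

noncomputable def E (hS : IsOreExtension σ δ f x) : (ℕ →₀ R) ≃+ S :=
  AddEquiv.ofBijective (φ f x) (by exact hS.basis)

lemma E_apply (hS : IsOreExtension σ δ f x) (a : ℕ →₀ R) :
    E hS a = a.sum fun i r => f r * x ^ i := rfl

lemma E_single (hS : IsOreExtension σ δ f x) (i : ℕ) (r : R) :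
    E hS (Finsupp.single i r) = f r * x ^ i := φ_single i r

lemma δ_zero (hδ : IsSigmaDerivation (RingHom.id R) δ) : δ 0 = 0 := by
  have h := hδ.1 0 0
  rw [add_zero] at h
  exact add_left_cancel (a := δ 0) (by rw [add_zero, ← h] : δ 0 + δ 0 = δ 0 + 0)

lemma δ_one (hδ : IsSigmaDerivation (RingHom.id R) δ) : δ 1 = 0 := by
  have h := hδ.2 1 1
  rw [mul_one, RingHom.id_apply, one_mul, mul_one] at h
  exact add_left_cancel (a := δ 1) (by rw [add_zero, ← h] : δ 1 + δ 1 = δ 1 + 0)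

/-- Shift: multiplication by `x` on the right, on coefficients. -/
noncomputable def shiftF : (ℕ →₀ R) → (ℕ →₀ R) := Finsupp.mapDomain (· + 1)

/-- Apply `δ` to all coefficients. -/
noncomputable def Dmap (h0 : δ 0 = 0) (a : ℕ →₀ R) : ℕ →₀ R := Finsupp.mapRange δ h0 a

/-- Multiplication by `x` on the left, on coefficients. -/
noncomputable def mulXc (h0 : δ 0 = 0) (a : ℕ →₀ R) : ℕ →₀ R := Dmap h0 a + shiftF a

/-- Left scalar multiplication on coefficients. -/
noncomputable def lsmul (r : R) (a : ℕ →₀ R) : ℕ →₀ R := Finsupp.mapRange (r * ·) (mul_zero r) a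

lemma shiftF_apply_succ (a : ℕ →₀ R) (j : ℕ) : shiftF a (j + 1) = a j :=
  Finsupp.mapDomain_apply (add_left_injective 1) a j

lemma shiftF_apply_zero (a : ℕ →₀ R) : shiftF a 0 = 0 :=
  Finsupp.mapDomain_notin_range _ _ (by rintro ⟨y, hy⟩; exact Nat.succ_ne_zero y hy)

lemma lsmul_apply (r : R) (a : ℕ →₀ R) (j : ℕ) : lsmul r a j = r * a j :=
  Finsupp.mapRange_apply

lemma mulXc_apply_zero (h0 : δ 0 = 0) (a : ℕ →₀ R) : mulXc h0 a 0 = δ (a 0) := by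
  rw [mulXc, Finsupp.add_apply, shiftF_apply_zero, add_zero, Dmap, Finsupp.mapRange_apply]

lemma mulXc_apply_succ (h0 : δ 0 = 0) (a : ℕ →₀ R) (j : ℕ) :
    mulXc h0 a (j + 1) = δ (a (j + 1)) + a j := by
  rw [mulXc, Finsupp.add_apply, shiftF_apply_succ, Dmap, Finsupp.mapRange_apply]

variable (hδ : IsSigmaDerivation (RingHom.id R) δ) (hS : IsOreExtension (RingHom.id R) δ f x)

lemma x_mul (a : ℕ →₀ R) : x * E hS a = E hS (mulXc (δ_zero hδ) a) := by
  induction a using Finsupp.induction_linear with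
  | zero => simp only [map_zero, mul_zero, mulXc, Dmap, shiftF, Finsupp.mapRange_zero,
      Finsupp.mapDomain_zero, add_zero]
  | add a b iha ihb =>
      have : mulXc (δ_zero hδ) (a + b) = mulXc (δ_zero hδ) a + mulXc (δ_zero hδ) b := by
        simp only [mulXc, Dmap, shiftF, Finsupp.mapDomain_add]
        rw [Finsupp.mapRange_add hδ.1]
        abel
      rw [map_add, mul_add, iha, ihb, this, map_add]
  | single i r =>
      have h1 : mulXc (δ_zero hδ) (Finsupp.single i r)
          = Finsupp.single i (δ r) + Finsupp.single (i + 1) r := by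
        rw [mulXc, Dmap, shiftF, Finsupp.mapRange_single, Finsupp.mapDomain_single]
      rw [h1, map_add, E_single, E_single, E_single, ← mul_assoc, hS.rel, RingHom.id_apply,
        add_mul, mul_assoc, ← pow_succ']
      abel

lemma mul_x (a : ℕ →₀ R) : E hS a * x = E hS (shiftF a) := by
  induction a using Finsupp.induction_linear with
  | zero => simp only [map_zero, zero_mul, shiftF, Finsupp.mapDomain_zero]
  | add a b iha ihb => rw [map_add, add_mul, iha, ihb, shiftF, Finsupp.mapDomain_add, map_add]
  | single i r =>
      rw [shiftF, Finsupp.mapDomain_single, E_single, E_single, mul_assoc, ← pow_succ]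

lemma f_mul (r : R) (a : ℕ →₀ R) : f r * E hS a = E hS (lsmul r a) := by
  induction a using Finsupp.induction_linear with
  | zero => simp only [map_zero, mul_zero, lsmul, Finsupp.mapRange_zero]
  | add a b iha ihb =>
      have hl : lsmul r (a + b) = lsmul r a + lsmul r b := by
        rw [lsmul, Finsupp.mapRange_add (mul_add r)]; rfl
      rw [hl, map_add, map_add, mul_add, iha, ihb]
  | single i c =>
      rw [lsmul, Finsupp.mapRange_single, E_single, E_single, ← mul_assoc, ← map_mul]

lemma pow_mul_f (i : ℕ) (r : R) :
    x ^ i * f r = E hS ((mulXc (δ_zero hδ))^[i] (Finsupp.single 0 r)) := by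
  induction i with
  | zero => rw [pow_zero, one_mul, Function.iterate_zero_apply, E_single, pow_zero, mul_one]
  | succ i ih =>
      rw [pow_succ', mul_assoc, ih, x_mul hδ hS, Function.iterate_succ_apply']

/-- Coefficients of `E a * f r`. -/
noncomputable def mulCoefF (h0 : δ 0 = 0) (a : ℕ →₀ R) (r : R) : ℕ →₀ R :=
  a.sum fun i c => lsmul c ((mulXc h0)^[i] (Finsupp.single 0 r))

lemma mul_f (a : ℕ →₀ R) (r : R) :
    E hS a * f r = E hS (mulCoefF (δ_zero hδ) a r) := by
  have hkey : ∀ i c, E hS (lsmul c ((mulXc (δ_zero hδ))^[i] (Finsupp.single 0 r)))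
      = f c * x ^ i * f r := by
    intro i c
    rw [← f_mul hS, ← pow_mul_f hδ hS, mul_assoc]
  rw [mulCoefF, map_finsuppSum]
  calc E hS a * f r = (a.sum fun i c => f c * x ^ i) * f r := by rw [E_apply]
    _ = a.sum fun i c => f c * x ^ i * f r := Finsupp.sum_mul _ _
    _ = a.sum fun i c => E hS (lsmul c ((mulXc (δ_zero hδ))^[i] (Finsupp.single 0 r))) :=
        Finsupp.sum_congr fun i _ => (hkey i (a i)).symm

lemma iter_apply (i : ℕ) (r : R) :
    (∀ j, i < j → (mulXc (δ_zero hδ))^[i] (Finsupp.single 0 r) j = 0) ∧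
      (mulXc (δ_zero hδ))^[i] (Finsupp.single 0 r) i = r := by
  induction i with
  | zero =>
      refine ⟨fun j hj => Finsupp.single_eq_of_ne (by omega), Finsupp.single_eq_same⟩
  | succ i ih =>
      rw [Function.iterate_succ_apply']
      constructor
      · intro j hj
        rcases j with _ | k
        · omega
        · rw [mulXc_apply_succ, ih.1 (k + 1) (by omega), ih.1 k (by omega), δ_zero hδ, add_zero]
      · rw [mulXc_apply_succ, ih.1 (i + 1) (by omega), δ_zero hδ, zero_add, ih.2]

lemma mulCoefF_bound (a : ℕ →₀ R) (r : R) (n : ℕ) (ha : ∀ j, n < j → a j = 0) :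
    (∀ j, n < j → mulCoefF (δ_zero hδ) a r j = 0) ∧
      mulCoefF (δ_zero hδ) a r n = a n * r := by
  have hsupp : ∀ i ∈ a.support, i ≤ n := by
    intro i hi
    by_contra h
    exact Finsupp.mem_support_iff.mp hi (ha i (by omega))
  constructor
  · intro j hj
    rw [mulCoefF, Finsupp.sum_apply]
    refine Finset.sum_eq_zero fun i hi => ?_
    simp only [lsmul_apply]
    rw [(iter_apply hδ i r).1 j (by have := hsupp i hi; omega), mul_zero]
  · rw [mulCoefF, Finsupp.sum_apply, Finsupp.sum]
    rw [Finset.sum_eq_single n (fun i hi hne => ?_) (fun hn => ?_)]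
    · simp only [lsmul_apply]; rw [(iter_apply hδ n r).2]
    · simp only [lsmul_apply]
      rw [(iter_apply hδ i r).1 n (by have := hsupp i hi; omega), mul_zero]
    · simp only [lsmul_apply]; rw [Finsupp.notMem_support_iff.mp hn, zero_mul]

end Stmt14Aux


/-- If `R` is `δ`-simple, then every non-zero two-sided ideal of `S = R[x;id,δ]`
intersects the center `Z(S)` non-trivially. -/
theorem stmt_14 {R S : Type*} [Ring R] [Ring S] (δ : R → R)
    (hδ : IsSigmaDerivation (RingHom.id R) δ) (hdsimple : IsDeltaSimple δ)
    (f : R →+* S) (x : S) (hS : IsOreExtension (RingHom.id R) δ f x)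
    (I : TwoSidedIdeal S) (hI : I ≠ ⊥) :
    ∃ s : S, s ∈ I ∧ s ≠ 0 ∧ s ∈ Subring.center S := by
  classical
  open Stmt14Aux in
  let E := Stmt14Aux.E hS
  have δ0 : δ 0 = 0 := Stmt14Aux.δ_zero hδ
  -- the commutator with `x` applies `δ` to all coefficients
  have hcomm : ∀ c : ℕ →₀ R, x * E c - E c * x = E (Finsupp.mapRange δ δ0 c) := by
    intro c
    rw [Stmt14Aux.x_mul hδ hS, Stmt14Aux.mul_x hS, ← map_sub]
    congr 1
    ext j
    rcases j with _ | j
    · rw [Finsupp.sub_apply, Stmt14Aux.mulXc_apply_zero, Stmt14Aux.shiftF_apply_zero, sub_zero,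
        Finsupp.mapRange_apply]
    · rw [Finsupp.sub_apply, Stmt14Aux.mulXc_apply_succ, Stmt14Aux.shiftF_apply_succ,
        add_sub_cancel_right, Finsupp.mapRange_apply]
  -- a nonzero element of I
  have hex : ∃ s : S, s ∈ I ∧ s ≠ 0 := by
    by_contra h
    push_neg at h
    refine hI (TwoSidedIdeal.ext fun s => ?_)
    rw [TwoSidedIdeal.mem_bot]
    exact ⟨fun hs => h s hs, fun hs => hs ▸ I.zero_mem⟩
  obtain ⟨s₀, hs₀I, hs₀⟩ := hex
  -- minimal degree
  let P : ℕ → Prop := fun n => ∃ c : ℕ →₀ R, E c ∈ I ∧ E c ≠ 0 ∧ ∀ j, n < j → c j = 0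
  have hP : ∃ n, P n := by
    refine ⟨(E.symm s₀).support.sup id, E.symm s₀, ?_, ?_, ?_⟩
    · rw [AddEquiv.apply_symm_apply]; exact hs₀I
    · rw [AddEquiv.apply_symm_apply]; exact hs₀
    · intro j hj
      by_contra h
      have hjs : j ∈ (E.symm s₀).support := Finsupp.mem_support_iff.mpr h
      have hle := Finset.le_sup (f := id) hjs
      simp only [id] at hle
      omega
  set n := Nat.find hP with hn
  obtain ⟨a, haI, ha0, habd⟩ : P n := Nat.find_spec hP
  -- minimality: elements of I with coefficients vanishing from degree n on are zero
  have hmin : ∀ c : ℕ →₀ R, E c ∈ I → (∀ j, n ≤ j → c j = 0) → E c = 0 := by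
    intro c hcI hc
    by_contra h
    rcases Nat.eq_zero_or_pos n with h0 | hpos
    · have hc0 : c = 0 := Finsupp.ext fun j => hc j (by omega)
      rw [hc0, map_zero] at h
      exact h rfl
    · exact Nat.find_min hP (show n - 1 < n by omega)
        ⟨c, hcI, h, fun j hj => hc j (by omega)⟩
  -- the ideal of leading coefficients
  let Jc : Set R := {r | ∃ c : ℕ →₀ R, E c ∈ I ∧ (∀ j, n < j → c j = 0) ∧ c n = r}
  have hJzero : (0 : R) ∈ Jc :=
    ⟨0, by rw [map_zero]; exact I.zero_mem, fun j _ => rfl, rfl⟩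
  have hJadd : ∀ {r r' : R}, r ∈ Jc → r' ∈ Jc → r + r' ∈ Jc := by
    rintro r r' ⟨c, hcI, hcb, rfl⟩ ⟨c', hcI', hcb', rfl⟩
    exact ⟨c + c', by rw [map_add]; exact I.add_mem hcI hcI',
      fun j hj => by rw [Finsupp.add_apply, hcb j hj, hcb' j hj, add_zero],
      Finsupp.add_apply ..⟩
  have hJneg : ∀ {r : R}, r ∈ Jc → -r ∈ Jc := by
    rintro r ⟨c, hcI, hcb, rfl⟩
    exact ⟨-c, by rw [map_neg]; exact I.neg_mem hcI,
      fun j hj => by rw [Finsupp.neg_apply, hcb j hj, neg_zero], Finsupp.neg_apply ..⟩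
  have hJml : ∀ {r' r : R}, r ∈ Jc → r' * r ∈ Jc := by
    rintro r' r ⟨c, hcI, hcb, rfl⟩
    refine ⟨Stmt14Aux.lsmul r' c, ?_, fun j hj => ?_, Stmt14Aux.lsmul_apply ..⟩
    · rw [← Stmt14Aux.f_mul hS]; exact I.mul_mem_left _ _ hcI
    · rw [Stmt14Aux.lsmul_apply, hcb j hj, mul_zero]
  have hJmr : ∀ {r r' : R}, r ∈ Jc → r * r' ∈ Jc := by
    rintro r r' ⟨c, hcI, hcb, rfl⟩
    refine ⟨Stmt14Aux.mulCoefF δ0 c r', ?_, (Stmt14Aux.mulCoefF_bound hδ c r' n hcb).1,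
      (Stmt14Aux.mulCoefF_bound hδ c r' n hcb).2⟩
    rw [← Stmt14Aux.mul_f hδ hS]; exact I.mul_mem_right _ _ hcI
  let J : TwoSidedIdeal R := TwoSidedIdeal.mk' Jc hJzero hJadd hJneg hJml hJmr
  have hJmem : ∀ r : R, r ∈ J ↔ r ∈ Jc :=
    TwoSidedIdeal.mem_mk' Jc hJzero hJadd hJneg hJml hJmr
  -- J is δ-invariant
  have hJδ : ∀ r ∈ J, δ r ∈ J := by
    intro r hr
    rw [hJmem] at hr ⊢
    obtain ⟨c, hcI, hcb, rfl⟩ := hr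
    refine ⟨Finsupp.mapRange δ δ0 c, ?_, fun j hj => ?_, Finsupp.mapRange_apply⟩
    · rw [← hcomm]
      exact I.sub_mem (I.mul_mem_left _ _ hcI) (I.mul_mem_right _ _ hcI)
    · rw [Finsupp.mapRange_apply, hcb j hj, δ0]
  -- J is nonzero
  have hann : a n ≠ 0 := by
    intro h
    refine ha0 (hmin a haI fun j hj => ?_)
    rcases Nat.eq_or_lt_of_le hj with h' | h'
    · rw [← h']; exact h
    · exact habd j h'
  have hJne : J ≠ ⊥ := by
    intro h
    refine hann ?_
    have : a n ∈ J := (hJmem _).mpr ⟨a, haI, habd, rfl⟩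
    rwa [h, TwoSidedIdeal.mem_bot] at this
  have hJtop : J = ⊤ := (hdsimple J hJδ).resolve_left hJne
  have h1 : (1 : R) ∈ Jc := by
    rw [← hJmem, hJtop]; exact TwoSidedIdeal.mem_top R
  obtain ⟨b, hbI, hbbd, hbn⟩ := h1
  -- q = E b is the desired central element
  have hq0 : E b ≠ 0 := by
    intro h
    have hb : b = 0 := E.injective (by rw [h, map_zero])
    rw [hb, Finsupp.zero_apply] at hbn
    exact hann (by rw [← mul_one (a n), ← hbn, mul_zero])
  have hcx : x * E b = E b * x := by
    have hz : E (Finsupp.mapRange δ δ0 b) = 0 := by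
      refine hmin _ ?_ fun j hj => ?_
      · rw [← hcomm]
        exact I.sub_mem (I.mul_mem_left _ _ hbI) (I.mul_mem_right _ _ hbI)
      · rw [Finsupp.mapRange_apply]
        rcases Nat.eq_or_lt_of_le hj with h' | h'
        · rw [← h', hbn]; exact Stmt14Aux.δ_one hδ
        · rw [hbbd j h', δ0]
    have := hcomm b
    rw [hz] at this
    exact sub_eq_zero.mp this
  have hcf : ∀ r : R, f r * E b = E b * f r := by
    intro r
    have hdiff : f r * E b - E b * f r = E (Stmt14Aux.lsmul r b - Stmt14Aux.mulCoefF δ0 b r) := by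
      rw [map_sub, ← Stmt14Aux.f_mul hS, ← Stmt14Aux.mul_f hδ hS]
    have hz : E (Stmt14Aux.lsmul r b - Stmt14Aux.mulCoefF δ0 b r) = 0 := by
      refine hmin _ ?_ fun j hj => ?_
      · rw [← hdiff]
        exact I.sub_mem (I.mul_mem_left _ _ hbI) (I.mul_mem_right _ _ hbI)
      · rw [Finsupp.sub_apply, Stmt14Aux.lsmul_apply]
        rcases Nat.eq_or_lt_of_le hj with h' | h'
        · rw [← h', hbn, (Stmt14Aux.mulCoefF_bound hδ b r n hbbd).2, hbn, mul_one, one_mul,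
            sub_self]
        · rw [hbbd j h', (Stmt14Aux.mulCoefF_bound hδ b r n hbbd).1 j h', mul_zero, sub_zero]
    rw [hz] at hdiff
    exact sub_eq_zero.mp hdiff
  refine ⟨E b, hbI, hq0, Subring.mem_center_iff.mpr fun g => ?_⟩
  obtain ⟨c, rfl⟩ := E.surjective g
  have hcq : ∀ i (r : R), Commute (E b) (f r * x ^ i) := fun i r =>
    Commute.mul_right ((hcf r).symm) (Commute.pow_right hcx.symm i)
  have : Commute (E b) (E c) := by
    rw [Stmt14Aux.E_apply, Finsupp.sum]
    exact Commute.sum_right _ _ _ fun i _ => hcq i (c i)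
  exact this.eq.symm
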